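/- Exactness of interpolative decompositions computed from proxy rows: let A ∈ Matrix (Fin m) (Fin n) ℂ and let σ : Fin s → Fin m index a set of proxy rows that spans the row space of A, in the sense that there exists X ∈ Matrix (Fin m) (Fin s) ℂ with A = X · A(σ,:). If the column ID computed on the proxy rows is exact, i.e. there exist γ : Fin r → Fin n and V ∈ Matrix (Fin r) (Fin n) ℂ with A(σ,:) = A(σ,γ) · V, then the same skeleton columns and interpolation matrix give an exact column ID of the full matrix: A = A(:,γ) · V. -/
import Mathlib

/-- Exactness of interpolative decompositions computed from proxy rows: if the
proxy rows `σ` span the row space of `A` (i.e. `A = X · A(σ,:)` for some `X`)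
and the column ID computed on the proxy rows is exact, then the same skeleton
columns and interpolation matrix give an exact column ID of the full matrix. -/
theorem proxy_row_ID_exact (m n s r : ℕ)
    (A : Matrix (Fin m) (Fin n) ℂ)
    (σ : Fin s → Fin m) (X : Matrix (Fin m) (Fin s) ℂ)
    (hproxy : A = X * A.submatrix σ id)
    (γ : Fin r → Fin n) (V : Matrix (Fin r) (Fin n) ℂ)
    (hID : A.submatrix σ id = A.submatrix σ γ * V) :
    A = A.submatrix id γ * V := by
  have hcol : A.submatrix id γ = X * A.submatrix σ γ := by
    ext i j
    have := congrFun (congrFun hproxy i) (γ j)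
    simpa [Matrix.mul_apply, Matrix.submatrix] using this
  rw [hcol, Matrix.mul_assoc, ← hID, ← hproxy]
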